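/- Let E, F be finite-dimensional real inner product spaces, f : E → ℝ and g : F → ℝ convex and lower semicontinuous, τ, σ, θ > 0, μ_x, μ_y ≥ 0, and let Ψ : E × F → ℝ be differentiable such that: for every y ∈ F the map x ↦ Ψ(x,y) is μ_x-strongly convex; for every x ∈ E the map y ↦ Ψ(x,y) is μ_y-strongly concave; ‖∇_xΨ(x,y) − ∇_xΨ(x′,y′)‖ ≤ L′_xx‖x−x′‖ + L_xy‖y−y′‖; and ‖∇_yΨ(x,y) − ∇_yΨ(x′,y′)‖ ≤ L_yx‖x−x′‖ + L_yy‖y−y′‖ for all x,x′ ∈ E, y,y′ ∈ F. Given points x₋, x₀ ∈ E, y₋, y₀ ∈ F and vectors s̃ ∈ F, ĝ ∈ E, define y₁ = prox_{σg}(y₀ + σ·s̃), x₁ = prox_{τf}(x₀ − τ·ĝ), q₀ = ∇_yΨ(x₀,y₀) − ∇_yΨ(x₋,y₋), q₁ = ∇_yΨ(x₁,y₁) − ∇_yΨ(x₀,y₀), s₀ = ∇_yΨ(x₀,y₀) + θ·q₀, and L(x,y) = f(x) + Ψ(x,y) − g(y). Then for all x ∈ E and y ∈ F: L(x₁, y)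 − L(x, y₁) ≤ −⟨q₁, y₁ − y⟩ + θ⟨q₀, y₀ − y⟩ + [(1/(2τ) − μ_x/2)‖x − x₀‖² + (1/(2σ))‖y − y₀‖²] − [(1/(2τ))‖x − x₁‖² + (1/(2σ) + μ_y/2)‖y − y₁‖²] + [(L′_xx/2 − 1/(2τ))‖x₁ − x₀‖² − (1/(2σ))‖y₁ − y₀‖² + θ·L_yx·‖x₀ − x₋‖·‖y₁ − y₀‖ + θ·L_yy·‖y₀ − y₋‖·‖y₁ − y₀‖] + ⟨ĝ − ∇_xΨ(x₀, y₁), x − x₁⟩ + ⟨s̃ − s₀, y₁ − y⟩. -/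

import Mathlib

open RealInnerProductSpace

set_option linter.unusedSectionVars false

section helpers
variable {E : Type*} [NormedAddCommGroup E] [InnerProductSpace ℝ E] [CompleteSpace E]

lemma sapd_line_deriv (h : E → ℝ) (hd : Differentiable ℝ h) (x v : E) (t : ℝ) :
    HasDerivAt (fun s : ℝ => h (x + s • v)) ⟪gradient h (x + t • v), v⟫ t := by
  have hc : HasDerivAt (fun s : ℝ => x + s • v) v t := by
    simpa using ((hasDerivAt_id t).smul_const v).const_add x
  have hg := (hd (x + t • v)).hasGradientAt
  rw [hasGradientAt_iff_hasFDerivAt] at hg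
  have := hg.comp_hasDerivAt t hc
  simp only [InnerProductSpace.toDual_apply_apply] at this
  exact this

lemma sapd_normsq_deriv (x v : E) (t : ℝ) :
    HasDerivAt (fun s : ℝ => ‖x + s • v‖ ^ 2) (2 * ⟪x + t • v, v⟫) t := by
  have hc : HasDerivAt (fun s : ℝ => x + s • v) v t := by
    simpa using ((hasDerivAt_id t).smul_const v).const_add x
  have h1 := hc.inner ℝ hc
  have heq : (fun s : ℝ => ⟪x + s • v, x + s • v⟫) = fun s : ℝ => ‖x + s • v‖ ^ 2 := by
    funext s; rw [real_inner_self_eq_norm_sq]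
  rw [heq] at h1
  refine h1.congr_deriv ?_
  rw [real_inner_comm]; ring

set_option linter.unusedSectionVars false

lemma sapd_strong_grad (h : E → ℝ) (μ : ℝ) (hd : Differentiable ℝ h)
    (hc : ConvexOn ℝ Set.univ (fun w => h w - μ / 2 * ‖w‖ ^ 2)) (x y : E) :
    h x + ⟪gradient h x, y - x⟫ + μ / 2 * ‖y - x‖ ^ 2 ≤ h y := by
  set v := y - x with hv
  set φ : ℝ → ℝ := fun t => h (x + t • v) - μ / 2 * ‖x + t • v‖ ^ 2 with hφ
  have hφconv : ConvexOn ℝ Set.univ φ := by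
    refine ⟨convex_univ, ?_⟩
    intro a _ b _ p q hp hq hpq
    have key : p • (x + a • v) + q • (x + b • v) = x + (p * a + q * b) • v := by
      calc p • (x + a • v) + q • (x + b • v)
          = (p + q) • x + (p * a + q * b) • v := by
            simp only [smul_add, smul_smul, add_smul]; abel
        _ = x + (p * a + q * b) • v := by rw [hpq, one_smul]
    have h2 := hc.2 (Set.mem_univ (x + a • v)) (Set.mem_univ (x + b • v)) hp hq hpq
    simp only [key, smul_eq_mul] at h2
    simpa [hφ] using h2
  have hderiv : HasDerivAt φ (⟪gradient h x, v⟫ - μ * ⟪x, v⟫) 0 := by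
    have h1 := sapd_line_deriv h hd x v 0
    have h2 := sapd_normsq_deriv x v 0
    have h3 := h1.sub ((h2.const_mul (μ / 2)))
    simp only [zero_smul, add_zero] at h3
    refine h3.congr_deriv ?_
    ring
  have hslope := hφconv.le_slope_of_hasDerivAt (Set.mem_univ (0:ℝ)) (Set.mem_univ (1:ℝ))
    one_pos hderiv
  rw [slope_def_field] at hslope
  have e0 : φ 0 = h x - μ / 2 * ‖x‖ ^ 2 := by simp [hφ]
  have e1 : φ 1 = h y - μ / 2 * ‖y‖ ^ 2 := by simp [hφ, hv]
  have eid : ‖v‖ ^ 2 = ‖y‖ ^ 2 - 2 * ⟪y, x⟫ + ‖x‖ ^ 2 := by rw [hv]; exact norm_sub_sq_real y x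
  have eid2 : ⟪x, v⟫ = ⟪y, x⟫ - ‖x‖ ^ 2 := by
    rw [hv, inner_sub_right, real_inner_self_eq_norm_sq, real_inner_comm]
  rw [e0, e1] at hslope
  have eid3 : μ / 2 * ‖v‖ ^ 2 = μ / 2 * ‖y‖ ^ 2 - μ * ⟪y, x⟫ + μ / 2 * ‖x‖ ^ 2 := by rw [eid]; ring
  have eid4 : μ * ⟪x, v⟫ = μ * ⟪y, x⟫ - μ * ‖x‖ ^ 2 := by rw [eid2]; ring
  linarith [hslope]

lemma sapd_descent (h : E → ℝ) (L : ℝ) (hd : Differentiable ℝ h)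
    (hlip : ∀ a b : E, ‖gradient h a - gradient h b‖ ≤ L * ‖a - b‖) (x y : E) :
    h y ≤ h x + ⟪gradient h x, y - x⟫ + L / 2 * ‖y - x‖ ^ 2 := by
  set v := y - x with hv
  set φ : ℝ → ℝ := fun t =>
    h (x + t • v) - t * ⟪gradient h x, v⟫ - L * t ^ 2 / 2 * ‖v‖ ^ 2 with hφ
  have hderiv : ∀ t : ℝ, HasDerivAt φ
      (⟪gradient h (x + t • v), v⟫ - ⟪gradient h x, v⟫ - L * t * ‖v‖ ^ 2) t := by
    intro t
    have h1 := sapd_line_deriv h hd x v t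
    have h2 : HasDerivAt (fun t : ℝ => t * ⟪gradient h x, v⟫) ⟪gradient h x, v⟫ t := by
      simpa using (hasDerivAt_id t).mul_const ⟪gradient h x, v⟫
    have h3 : HasDerivAt (fun t : ℝ => L * t ^ 2 / 2 * ‖v‖ ^ 2) (L * t * ‖v‖ ^ 2) t := by
      have := ((hasDerivAt_pow 2 t).const_mul L).div_const 2
      have h4 := this.mul_const (‖v‖ ^ 2)
      refine h4.congr_deriv ?_
      ring
    exact (h1.sub h2).sub h3
  have hanti : AntitoneOn φ (Set.Icc 0 1) := by
    apply antitoneOn_of_deriv_nonpos (convex_Icc 0 1)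
    · exact fun t _ => ((hderiv t).differentiableAt).continuousAt.continuousWithinAt
    · exact fun t _ => ((hderiv t).differentiableAt).differentiableWithinAt
    · intro t ht
      rw [interior_Icc] at ht
      rw [(hderiv t).deriv]
      have hb := real_inner_le_norm (gradient h (x + t • v) - gradient h x) v
      have hl := hlip (x + t • v) x
      have he : (x + t • v) - x = t • v := by abel
      rw [he, norm_smul, Real.norm_eq_abs, abs_of_pos ht.1] at hl
      have hinner : ⟪gradient h (x + t • v), v⟫ - ⟪gradient h x, v⟫
          = ⟪gradient h (x + t • v) - gradient h x, v⟫ := by rw [inner_sub_left]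
      rw [hinner]
      nlinarith [norm_nonneg v, norm_nonneg (gradient h (x + t • v) - gradient h x)]
  have hle := hanti (Set.left_mem_Icc.mpr zero_le_one) (Set.right_mem_Icc.mpr zero_le_one)
    zero_le_one
  have e0 : φ 0 = h x := by simp [hφ]
  have e1 : φ 1 = h y - ⟪gradient h x, v⟫ - L / 2 * ‖v‖ ^ 2 := by
    simp [hφ, hv]
  rw [e0, e1] at hle
  linarith

lemma sapd_prox (f : E → ℝ) (hf : ConvexOn ℝ Set.univ f) (τ : ℝ) (hτ : 0 < τ) (z x₁ : E)
    (hmin : IsMinOn (fun w => f w + 1 / (2 * τ) * ‖w - z‖ ^ 2) Set.univ x₁) (x : E) :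
    f x₁ + 1 / (2 * τ) * ‖x₁ - z‖ ^ 2 + 1 / (2 * τ) * ‖x - x₁‖ ^ 2
      ≤ f x + 1 / (2 * τ) * ‖x - z‖ ^ 2 := by
  set K := 1 / (2 * τ) with hK
  have hK0 : 0 < K := by rw [hK]; positivity
  set A := ‖x₁ - z‖ ^ 2 with hA
  set B := ‖x - z‖ ^ 2 with hB
  set C := ‖x - x₁‖ ^ 2 with hC
  have hC0 : 0 ≤ C := by rw [hC]; positivity
  refine le_of_forall_pos_le_add fun ε hε => ?_
  set t : ℝ := min (1/2) (ε / (K * C + 1)) with ht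
  have ht0 : 0 < t := by
    apply lt_min (by norm_num)
    positivity
  have ht1 : t ≤ 1/2 := min_le_left _ _
  have htε : t * (K * C) ≤ ε := by
    have h1 : t ≤ ε / (K * C + 1) := min_le_right _ _
    have h2 : 0 ≤ K * C := by positivity
    have h3 : t * (K * C) ≤ ε / (K * C + 1) * (K * C) :=
      mul_le_mul_of_nonneg_right h1 h2
    have h4 : ε / (K * C + 1) * (K * C + 1) = ε := by
      field_simp
    nlinarith [div_nonneg hε.le (by positivity : (0:ℝ) ≤ K * C + 1)]
  -- the point w
  set w : E := x₁ + t • (x - x₁) with hw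
  have hmw : f x₁ + K * A ≤ f w + K * ‖w - z‖ ^ 2 := isMinOn_iff.mp hmin w (Set.mem_univ w)
  have hconv : f w ≤ (1 - t) * f x₁ + t * f x := by
    have hcomb : (1 - t) • x₁ + t • x = w := by
      rw [hw]; rw [sub_smul, one_smul, smul_sub]; abel
    have := hf.2 (Set.mem_univ x₁) (Set.mem_univ x) (by linarith : (0:ℝ) ≤ 1 - t) ht0.le
      (by ring)
    rw [hcomb] at this
    simpa using this
  have equad : ‖w - z‖ ^ 2 = A + 2 * t * ⟪x₁ - z, x - x₁⟫ + t ^ 2 * C := by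
    have h1 : w - z = (x₁ - z) + t • (x - x₁) := by rw [hw]; abel
    rw [h1, norm_add_sq_real, real_inner_smul_right, norm_smul, Real.norm_eq_abs, mul_pow,
      sq_abs, hA, hC]
    ring
  have eB : B = A + 2 * ⟪x₁ - z, x - x₁⟫ + C := by
    have h1 : x - z = (x₁ - z) + (x - x₁) := by abel
    rw [hB, h1, norm_add_sq_real, hA, hC]
  -- combine
  rw [equad] at hmw
  have h5 : f x₁ ≤ f w + K * (2 * t * ⟪x₁ - z, x - x₁⟫) + K * (t ^ 2 * C) := by linarith
  have h6 : t * f x₁ ≤ t * f x + K * (2 * t * ⟪x₁ - z, x - x₁⟫) + K * (t ^ 2 * C) := by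
    linarith [hconv]
  have eBt : t * (K * B) = t * (K * A) + 2 * (t * (K * ⟪x₁ - z, x - x₁⟫)) + t * (K * C) := by
    rw [eB]; ring
  have hmain : t * (f x₁ + K * A + K * C) ≤ t * (f x + K * B + t * (K * C)) := by
    nlinarith [h6, eBt]
  have hdiv : f x₁ + K * A + K * C ≤ f x + K * B + t * (K * C) :=
    le_of_mul_le_mul_left hmain ht0
  linarith

lemma sapd_grad_neg (h : E → ℝ) (hd : Differentiable ℝ h) (x : E) :
    gradient (fun w => -h w) x = -gradient h x := by
  have hg := (hd x).hasGradientAt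
  rw [hasGradientAt_iff_hasFDerivAt] at hg
  have hneg := hg.neg
  have h2 : HasGradientAt (fun w => -h w) (-gradient h x) x := by
    rw [hasGradientAt_iff_hasFDerivAt]
    refine hneg.congr_fderiv ?_
    simp
  exact h2.gradient

end helpers

/-- One-step SAPD inequality: for one (possibly inexact) SAPD iteration
`y₁ = prox_{σg}(y₀ + σ s̃)`, `x₁ = prox_{τf}(x₀ − τ ĝ)` applied to the strongly
convex–strongly concave Lagrangian `L(x,y) = f(x) + Ψ(x,y) − g(y)`, the gap
`L(x₁,y) − L(x,y₁)` is bounded by the stated quadratic-plus-error expression. -/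
theorem sapd_one_step_inequality
    {E F : Type*} [NormedAddCommGroup E] [InnerProductSpace ℝ E] [FiniteDimensional ℝ E]
    [NormedAddCommGroup F] [InnerProductSpace ℝ F] [FiniteDimensional ℝ F]
    (f : E → ℝ) (g : F → ℝ)
    (hf : ConvexOn ℝ Set.univ f) (hg : ConvexOn ℝ Set.univ g)
    (hflsc : LowerSemicontinuous f) (hglsc : LowerSemicontinuous g)
    (τ σ θ : ℝ) (hτ : 0 < τ) (hσ : 0 < σ) (hθ : 0 < θ)
    (μx μy : ℝ) (hμx : 0 ≤ μx) (hμy : 0 ≤ μy)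
    (L'xx Lxy Lyx Lyy : ℝ)
    (Ψ : E → F → ℝ)
    (hdx : ∀ y : F, Differentiable ℝ (fun x => Ψ x y))
    (hdy : ∀ x : E, Differentiable ℝ (Ψ x))
    (hsc : ∀ y : F, ConvexOn ℝ Set.univ (fun x => Ψ x y - μx / 2 * ‖x‖ ^ 2))
    (hscc : ∀ x : E, ConvexOn ℝ Set.univ (fun y => -Ψ x y - μy / 2 * ‖y‖ ^ 2))
    (hlipx : ∀ x x' : E, ∀ y y' : F,
      ‖gradient (fun z => Ψ z y) x - gradient (fun z => Ψ z y') x'‖ ≤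
        L'xx * ‖x - x'‖ + Lxy * ‖y - y'‖)
    (hlipy : ∀ x x' : E, ∀ y y' : F,
      ‖gradient (Ψ x) y - gradient (Ψ x') y'‖ ≤ Lyx * ‖x - x'‖ + Lyy * ‖y - y'‖)
    (xm x₀ x₁ : E) (ym y₀ y₁ : F) (stil : F) (ghat : E)
    (hy₁ : IsMinOn (fun w => g w + 1 / (2 * σ) * ‖w - (y₀ + σ • stil)‖ ^ 2) Set.univ y₁)
    (hx₁ : IsMinOn (fun w => f w + 1 / (2 * τ) * ‖w - (x₀ - τ • ghat)‖ ^ 2) Set.univ x₁) :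
    ∀ (x : E) (y : F),
      (f x₁ + Ψ x₁ y - g y) - (f x + Ψ x y₁ - g y₁) ≤
        -⟪gradient (Ψ x₁) y₁ - gradient (Ψ x₀) y₀, y₁ - y⟫
        + θ * ⟪gradient (Ψ x₀) y₀ - gradient (Ψ xm) ym, y₀ - y⟫
        + ((1 / (2 * τ) - μx / 2) * ‖x - x₀‖ ^ 2 + 1 / (2 * σ) * ‖y - y₀‖ ^ 2)
        - (1 / (2 * τ) * ‖x - x₁‖ ^ 2 + (1 / (2 * σ) + μy / 2) * ‖y - y₁‖ ^ 2)
        + ((L'xx / 2 - 1 / (2 * τ)) * ‖x₁ - x₀‖ ^ 2 - 1 / (2 * σ) * ‖y₁ - y₀‖ ^ 2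
            + θ * Lyx * ‖x₀ - xm‖ * ‖y₁ - y₀‖ + θ * Lyy * ‖y₀ - ym‖ * ‖y₁ - y₀‖)
        + ⟪ghat - gradient (fun z => Ψ z y₁) x₀, x - x₁⟫
        + ⟪stil - (gradient (Ψ x₀) y₀
            + θ • (gradient (Ψ x₀) y₀ - gradient (Ψ xm) ym)), y₁ - y⟫ := by
  intro x y
  -- prox identities
  have eKx : ∀ w : E, 1 / (2 * τ) * ‖w - (x₀ - τ • ghat)‖ ^ 2
      = 1 / (2 * τ) * ‖w - x₀‖ ^ 2 + ⟪ghat, w - x₀⟫ + τ / 2 * ‖ghat‖ ^ 2 := by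
    intro w
    have hw : w - (x₀ - τ • ghat) = (w - x₀) + τ • ghat := by abel
    rw [hw, norm_add_sq_real, real_inner_smul_right, norm_smul, Real.norm_eq_abs, mul_pow,
      sq_abs, real_inner_comm]
    field_simp
  have eMy : ∀ w : F, 1 / (2 * σ) * ‖w - (y₀ + σ • stil)‖ ^ 2
      = 1 / (2 * σ) * ‖w - y₀‖ ^ 2 - ⟪stil, w - y₀⟫ + σ / 2 * ‖stil‖ ^ 2 := by
    intro w
    have hw : w - (y₀ + σ • stil) = (w - y₀) - σ • stil := by abel
    rw [hw, norm_sub_sq_real, real_inner_smul_right, norm_smul, Real.norm_eq_abs, mul_pow,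
      sq_abs, real_inner_comm]
    field_simp
  -- prox inequalities
  have hprox1 := sapd_prox f hf τ hτ (x₀ - τ • ghat) x₁ hx₁ x
  rw [eKx x₁, eKx x] at hprox1
  have einner1 : ⟪ghat, x - x₀⟫ - ⟪ghat, x₁ - x₀⟫ = ⟪ghat, x - x₁⟫ := by
    rw [← inner_sub_right]; congr 1; abel
  have I1 : f x₁ - f x ≤ ⟪ghat, x - x₁⟫ + 1 / (2 * τ) * ‖x - x₀‖ ^ 2
      - 1 / (2 * τ) * ‖x - x₁‖ ^ 2 - 1 / (2 * τ) * ‖x₁ - x₀‖ ^ 2 := by linarith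
  have hprox2 := sapd_prox g hg σ hσ (y₀ + σ • stil) y₁ hy₁ y
  rw [eMy y₁, eMy y] at hprox2
  have einner2 : ⟪stil, y₁ - y₀⟫ - ⟪stil, y - y₀⟫ = ⟪stil, y₁ - y⟫ := by
    rw [← inner_sub_right]; congr 1; abel
  have I2 : g y₁ - g y ≤ ⟪stil, y₁ - y⟫ + 1 / (2 * σ) * ‖y - y₀‖ ^ 2
      - 1 / (2 * σ) * ‖y - y₁‖ ^ 2 - 1 / (2 * σ) * ‖y₁ - y₀‖ ^ 2 := by linarith
  -- strong convexity in x
  have I3 : Ψ x₀ y₁ + ⟪gradient (fun z => Ψ z y₁) x₀, x - x₀⟫ + μx / 2 * ‖x - x₀‖ ^ 2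
      ≤ Ψ x y₁ := by
    simpa using sapd_strong_grad (fun z => Ψ z y₁) μx (hdx y₁) (hsc y₁) x₀ x
  -- descent lemma in x
  have hlipx1 : ∀ a b : E, ‖gradient (fun z => Ψ z y₁) a - gradient (fun z => Ψ z y₁) b‖
      ≤ L'xx * ‖a - b‖ := by
    intro a b; simpa using hlipx a b y₁ y₁
  have I4 : Ψ x₁ y₁ ≤ Ψ x₀ y₁ + ⟪gradient (fun z => Ψ z y₁) x₀, x₁ - x₀⟫
      + L'xx / 2 * ‖x₁ - x₀‖ ^ 2 := by
    simpa using sapd_descent (fun z => Ψ z y₁) L'xx (hdx y₁) hlipx1 x₀ x₁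
  -- strong concavity in y
  have I5 : -Ψ x₁ y₁ - ⟪gradient (Ψ x₁) y₁, y - y₁⟫ + μy / 2 * ‖y - y₁‖ ^ 2 ≤ -Ψ x₁ y := by
    have h1 := sapd_strong_grad (fun w => -Ψ x₁ w) μy ((hdy x₁).neg) (hscc x₁) y₁ y
    rw [sapd_grad_neg (Ψ x₁) (hdy x₁) y₁] at h1
    have h2 : ⟪-gradient (Ψ x₁) y₁, y - y₁⟫ = -⟪gradient (Ψ x₁) y₁, y - y₁⟫ :=
      inner_neg_left _ _
    simp only [h2] at h1
    linarith [h1]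
  -- Lipschitz bound for the momentum term
  have I6 : θ * ⟪gradient (Ψ x₀) y₀ - gradient (Ψ xm) ym, y₁ - y₀⟫
      ≤ θ * Lyx * ‖x₀ - xm‖ * ‖y₁ - y₀‖ + θ * Lyy * ‖y₀ - ym‖ * ‖y₁ - y₀‖ := by
    have h1 := real_inner_le_norm (gradient (Ψ x₀) y₀ - gradient (Ψ xm) ym) (y₁ - y₀)
    have h3 : ⟪gradient (Ψ x₀) y₀ - gradient (Ψ xm) ym, y₁ - y₀⟫
        ≤ (Lyx * ‖x₀ - xm‖ + Lyy * ‖y₀ - ym‖) * ‖y₁ - y₀‖ :=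
      h1.trans (mul_le_mul_of_nonneg_right (hlipy x₀ xm y₀ ym) (norm_nonneg _))
    have h4 := mul_le_mul_of_nonneg_left h3 hθ.le
    nlinarith [h4]
  -- inner product identities
  have E1 : ⟪ghat - gradient (fun z => Ψ z y₁) x₀, x - x₁⟫
      = ⟪ghat, x - x₁⟫ - ⟪gradient (fun z => Ψ z y₁) x₀, x - x₁⟫ := inner_sub_left _ _ _
  have E2 : ⟪stil - (gradient (Ψ x₀) y₀ + θ • (gradient (Ψ x₀) y₀ - gradient (Ψ xm) ym)),
        y₁ - y⟫
      = ⟪stil, y₁ - y⟫ - ⟪gradient (Ψ x₀) y₀, y₁ - y⟫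
        - θ * ⟪gradient (Ψ x₀) y₀ - gradient (Ψ xm) ym, y₁ - y⟫ := by
    rw [inner_sub_left, inner_add_left, real_inner_smul_left]; ring
  have E3 : ⟪gradient (Ψ x₁) y₁ - gradient (Ψ x₀) y₀, y₁ - y⟫
      = ⟪gradient (Ψ x₁) y₁, y₁ - y⟫ - ⟪gradient (Ψ x₀) y₀, y₁ - y⟫ := inner_sub_left _ _ _
  have E4 : θ * ⟪gradient (Ψ x₀) y₀ - gradient (Ψ xm) ym, y₁ - y⟫
      = θ * ⟪gradient (Ψ x₀) y₀ - gradient (Ψ xm) ym, y₀ - y⟫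
        + θ * ⟪gradient (Ψ x₀) y₀ - gradient (Ψ xm) ym, y₁ - y₀⟫ := by
    have : ⟪gradient (Ψ x₀) y₀ - gradient (Ψ xm) ym, y₁ - y⟫
        = ⟪gradient (Ψ x₀) y₀ - gradient (Ψ xm) ym, y₀ - y⟫
          + ⟪gradient (Ψ x₀) y₀ - gradient (Ψ xm) ym, y₁ - y₀⟫ := by
      rw [← inner_add_right]; congr 1; abel
    rw [this]; ring
  have E5 : ⟪gradient (fun z => Ψ z y₁) x₀, x - x₀⟫
      = ⟪gradient (fun z => Ψ z y₁) x₀, x - x₁⟫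
        + ⟪gradient (fun z => Ψ z y₁) x₀, x₁ - x₀⟫ := by
    rw [← inner_add_right]; congr 1; abel
  have E6 : ⟪gradient (Ψ x₁) y₁, y - y₁⟫ = -⟪gradient (Ψ x₁) y₁, y₁ - y⟫ := by
    rw [show y - y₁ = -(y₁ - y) by abel, inner_neg_right]
  linarith [I1, I2, I3, I4, I5, I6, E1, E2, E3, E4, E5, E6]
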